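/- Fix a natural number n and distinct complex numbers p, q, r. On ℂ⁶ with coordinates (a, a', b, b', c, c') representing (w(p), w'(p), w(q), w'(q), w(r), w'(r)) together with the formal second derivatives treated via the derivative bracket rule, the bracket {w(p), w(q)} = pⁿ w'(p) w(q) − qⁿ w'(q) w(p), with the induced rule {w'(p), w(q)} = n p^{n−1} w'(p) w(q) + pⁿ w''(p) w(q) − qⁿ w'(q) w'(p), satisfies the Jacobi identity: {{w(p),w(q)}, w(r)} + {{w(r),w(p)}, w(q)} + {{w(q),w(r)}, w(p)} = 0, where each outer bracket is expanded by the Leibniz rule. Concretely, the sum of the three explicit expanded expressions — (p^{2n} w(q) w''(p) w(r) − q^{2n} w(p) w''(q) w(r) − 2 pⁿ rⁿ w'(p) w'(r) w(q) + 2 qⁿ rⁿ w'(q) w'(r) w(p) + n p^{2n−1} w(q) w'(p) w(r) − n q^{2n−1} w(p) w'(q) w(r)) and its two cyclic permutations in (p,q,r) — equals zero, where w(p), w'(p), w''(p), etc. are arbitrary complex numbers (nine free variables). -/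
import Mathlib


/-- The Leibniz-expanded Jacobi identity for the bracket
`{w(p),w(q)} = pⁿ w'(p) w(q) − qⁿ w'(q) w(p)`: the explicit expanded expression for
`{{w(p),w(q)},w(r)}` plus its two cyclic permutations in `(p,q,r)` vanishes, where
`wp, wp', wp''`, etc. denote the (arbitrary) values of `w, w', w''` at `p, q, r`. -/
theorem stmt_8 (n : ℕ) (p q r wp wq wr wp' wq' wr' wp'' wq'' wr'' : ℂ) :
    -- {{w(p),w(q)},w(r)}
    (p ^ (2 * n) * wq * wp'' * wr - q ^ (2 * n) * wp * wq'' * wr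
      - 2 * p ^ n * r ^ n * wp' * wr' * wq + 2 * q ^ n * r ^ n * wq' * wr' * wp
      + (n : ℂ) * p ^ (2 * n - 1) * wq * wp' * wr
      - (n : ℂ) * q ^ (2 * n - 1) * wp * wq' * wr)
    -- {{w(r),w(p)},w(q)}
    + (r ^ (2 * n) * wp * wr'' * wq - p ^ (2 * n) * wr * wp'' * wq
      - 2 * r ^ n * q ^ n * wr' * wq' * wp + 2 * p ^ n * q ^ n * wp' * wq' * wr
      + (n : ℂ) * r ^ (2 * n - 1) * wp * wr' * wq
      - (n : ℂ) * p ^ (2 * n - 1) * wr * wp' * wq)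
    -- {{w(q),w(r)},w(p)}
    + (q ^ (2 * n) * wr * wq'' * wp - r ^ (2 * n) * wq * wr'' * wp
      - 2 * q ^ n * p ^ n * wq' * wp' * wr + 2 * r ^ n * p ^ n * wr' * wp' * wq
      + (n : ℂ) * q ^ (2 * n - 1) * wr * wq' * wp
      - (n : ℂ) * r ^ (2 * n - 1) * wq * wr' * wp) = 0 := by
  ring
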